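/- Let p_{(i,i')} ≥ 0 for (i,i') ∈ {0,1}² with Σ_{(i,i')} p_{(i,i')} = 1, and let κ_{(i,i')} be density matrices on ℂ^m. For each (x₀,x₁) ∈ {0,1}² define the density matrix ρ_{(x₀,x₁)} = Σ_{(i,i')∈{0,1}²} p_{(i,i')}·(I₂/2) ⊗ |x_{i⊕i'} ⊕ i'⟩⟨x_{i⊕i'} ⊕ i'| ⊗ κ_{(i,i')} on ℂ²⊗ℂ²⊗ℂ^m. Then for every POVM (M_{(x₀,x₁)})_{(x₀,x₁)∈{0,1}²} on ℂ²⊗ℂ²⊗ℂ^m, the average success probability satisfies (1/4)·Σ_{(x₀,x₁)∈{0,1}²} Tr(M_{(x₀,x₁)} ρ_{(x₀,x₁)}) ≤ 1/2. -/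

import Mathlib

open Matrix Kronecker ComplexOrder

/-- The old Mathlib `Matrix.PosSemidef.sqrt` (removed upstream), restored with its old definition. -/
noncomputable def Matrix.PosSemidef.sqrt {n 𝕜 : Type*} [Fintype n] [DecidableEq n] [RCLike 𝕜]
    {A : Matrix n n 𝕜} (hA : A.PosSemidef) : Matrix n n 𝕜 :=
  hA.1.eigenvectorUnitary.1 * diagonal ((↑) ∘ (√·) ∘ hA.1.eigenvalues) *
    (star hA.1.eigenvectorUnitary : Matrix n n 𝕜)

/-- The trace norm `‖A‖₁ = Tr √(Aᴴ A)` of a complex matrix. -/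
noncomputable def traceNorm {n : Type*} [Fintype n] [DecidableEq n] (A : Matrix n n ℂ) : ℝ :=
  ((Matrix.posSemidef_conjTranspose_mul_self A).sqrt.trace).re

/-- The trace distance `Δ(ρ,σ) = ‖ρ - σ‖₁ / 2`. -/
noncomputable def traceDist {n : Type*} [Fintype n] [DecidableEq n] (ρ σ : Matrix n n ℂ) : ℝ :=
  traceNorm (ρ - σ) / 2

open scoped Classical in
/-- Positive semidefinite square root (junk value `0` on non-PSD matrices). -/
noncomputable def psdSqrt {n : Type*} [Fintype n] [DecidableEq n] (A : Matrix n n ℂ) :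
    Matrix n n ℂ :=
  if h : A.PosSemidef then h.sqrt else 0

/-- The fidelity `F(ρ,σ) = ‖√ρ √σ‖₁`. -/
noncomputable def fidelity {n : Type*} [Fintype n] [DecidableEq n] (ρ σ : Matrix n n ℂ) : ℝ :=
  traceNorm (psdSqrt ρ * psdSqrt σ)

/-- A density matrix: positive semidefinite with trace 1. -/
def IsDensityMatrix {n : Type*} [Fintype n] [DecidableEq n] (ρ : Matrix n n ℂ) : Prop :=
  ρ.PosSemidef ∧ ρ.trace = 1

/-- The projector `|b⟩⟨b|` on ℂ². -/
noncomputable def proj (b : Bool) : Matrix Bool Bool ℂ := Matrix.single b b 1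

/-- The strong oblivious transfer channel `F_{(x₀,x₁)}`. -/
noncomputable def sotChannel (x₀ x₁ : Bool) (ρ : Matrix (Bool × Bool) (Bool × Bool) ℂ) :
    Matrix (Bool × Bool) (Bool × Bool) ℂ :=
  ∑ i : Bool, ∑ i' : Bool,
    ρ (i, i') (i, i') •
      (((1/2 : ℂ) • (1 : Matrix Bool Bool ℂ)) ⊗ₖ proj (xor (bif xor i i' then x₁ else x₀) i'))


lemma kron_conjTranspose {l n : Type*} (A : Matrix l l ℂ) (B : Matrix n n ℂ) :
    (A ⊗ₖ B)ᴴ = Aᴴ ⊗ₖ Bᴴ := by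
  ext ⟨i, j⟩ ⟨k, l⟩
  simp [conjTranspose_apply, kroneckerMap_apply, star_mul']

lemma kron_psd {l n : Type*} [Fintype l] [Fintype n] [DecidableEq l] [DecidableEq n]
    {A : Matrix l l ℂ} {B : Matrix n n ℂ} (hA : A.PosSemidef) (hB : B.PosSemidef) :
    (A ⊗ₖ B).PosSemidef := by
  exact hA.kronecker hB

lemma psd_smul {n : Type*} [Fintype n] {A : Matrix n n ℂ} (hA : A.PosSemidef)
    {c : ℝ} (hc : 0 ≤ c) : (c • A).PosSemidef := by
  exact hA.smul hc

lemma psd_trace_nonneg {n : Type*} [Fintype n] [DecidableEq n] {A : Matrix n n ℂ}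
    (hA : A.PosSemidef) : (0:ℂ) ≤ A.trace := by
  exact hA.trace_nonneg

lemma psd_trace_mul_nonneg {n : Type*} [Fintype n] [DecidableEq n] {A B : Matrix n n ℂ}
    (hA : A.PosSemidef) (hB : B.PosSemidef) : (0:ℂ) ≤ (A * B).trace := by
  open scoped MatrixOrder in
  obtain ⟨a, rfl⟩ := CStarAlgebra.nonneg_iff_eq_star_mul_self.mp hA.nonneg
  have key := hB.mul_mul_conjTranspose_same a
  rw [star_eq_conjTranspose, mul_assoc, trace_mul_comm]
  exact psd_trace_nonneg key

lemma half_one_psd : (((1/2 : ℂ)) • (1 : Matrix Bool Bool ℂ)).PosSemidef := by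
  have h : ((1/2 : ℂ)) • (1 : Matrix Bool Bool ℂ) = (1/2 : ℝ) • (1 : Matrix Bool Bool ℂ) := by
    ext i j
    simp [Complex.real_smul]
  rw [h]
  exact psd_smul Matrix.PosSemidef.one (by norm_num)

lemma proj_psd (b : Bool) : (Matrix.single b b (1:ℂ)).PosSemidef := by
  have h : Matrix.single b b (1:ℂ) =
      Matrix.diagonal (fun i => if i = b then (1:ℂ) else 0) := by
    ext i j
    simp [Matrix.single, Matrix.diagonal]
    aesop
  rw [h]
  refine Matrix.PosSemidef.diagonal fun i => ?_
  dsimp only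
  split <;> norm_num

noncomputable def rhoAux {m : ℕ} (p : Bool × Bool → ℝ) (κ : Bool × Bool → Matrix (Fin m) (Fin m) ℂ)
    (x : Bool × Bool) : Matrix ((Bool × Bool) × Fin m) ((Bool × Bool) × Fin m) ℂ :=
  ∑ a : Bool × Bool, p a •
    ((((1/2 : ℂ) • (1 : Matrix Bool Bool ℂ)) ⊗ₖ
        proj (xor (bif xor a.1 a.2 then x.2 else x.1) a.2)) ⊗ₖ κ a)

lemma rho_psd {m : ℕ} (p : Bool × Bool → ℝ) (hp : ∀ a, 0 ≤ p a)
    (κ : Bool × Bool → Matrix (Fin m) (Fin m) ℂ) (hκ : ∀ a, (κ a).PosSemidef)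
    (x : Bool × Bool) : (rhoAux p κ x).PosSemidef := by
  refine Finset.sum_induction _ _ (fun a b ha hb => ha.add hb) Matrix.PosSemidef.zero ?_
  intro a _
  exact psd_smul (kron_psd (kron_psd half_one_psd (proj_psd _)) (hκ a)) (hp a)

lemma rho_trace {m : ℕ} (p : Bool × Bool → ℝ) (hpsum : ∑ a : Bool × Bool, p a = 1)
    (κ : Bool × Bool → Matrix (Fin m) (Fin m) ℂ) (hκ : ∀ a, (κ a).trace = 1)
    (x : Bool × Bool) : (rhoAux p κ x).trace = 1 := by
  unfold rhoAux
  rw [Matrix.trace_sum]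
  have h : ∀ a : Bool × Bool,
      (p a • ((((1/2 : ℂ) • (1 : Matrix Bool Bool ℂ)) ⊗ₖ
        proj (xor (bif xor a.1 a.2 then x.2 else x.1) a.2)) ⊗ₖ κ a)).trace = (p a : ℂ) := by
    intro a
    rw [Matrix.trace_smul, Matrix.trace_kronecker, Matrix.trace_kronecker, Matrix.trace_smul,
      Matrix.trace_one, hκ a, proj, Matrix.trace_single_eq_same]
    simp [Complex.real_smul]
  simp_rw [h]
  rw [← Complex.ofReal_sum, hpsum, Complex.ofReal_one]

lemma rho_swap {m : ℕ} (p : Bool × Bool → ℝ) (κ : Bool × Bool → Matrix (Fin m) (Fin m) ℂ) :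
    rhoAux p κ (false, false) + rhoAux p κ (true, true) =
      rhoAux p κ (false, true) + rhoAux p κ (true, false) := by
  unfold rhoAux
  rw [← Finset.sum_add_distrib, ← Finset.sum_add_distrib]
  refine Finset.sum_congr rfl fun a _ => ?_
  obtain ⟨i, i'⟩ := a
  cases i <;> cases i' <;> simp [add_comm]
/-- No POVM can identify `(x₀,x₁)` from the ideal-protocol output states with
average success probability exceeding `1/2`. -/
theorem stmt_12 {m : ℕ}
    (p : Bool × Bool → ℝ) (hp : ∀ a, 0 ≤ p a) (hpsum : ∑ a : Bool × Bool, p a = 1)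
    (κ : Bool × Bool → Matrix (Fin m) (Fin m) ℂ) (hκ : ∀ a, IsDensityMatrix (κ a))
    (M : Bool × Bool → Matrix ((Bool × Bool) × Fin m) ((Bool × Bool) × Fin m) ℂ)
    (hM : ∀ x, (M x).PosSemidef) (hMsum : ∑ x : Bool × Bool, M x = 1) :
    (1/4 : ℝ) * ∑ x : Bool × Bool,
        ((M x * ∑ a : Bool × Bool, p a •
          ((((1/2 : ℂ) • (1 : Matrix Bool Bool ℂ)) ⊗ₖ
              proj (xor (bif xor a.1 a.2 then x.2 else x.1) a.2)) ⊗ₖ κ a)).trace).re ≤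
      1/2 := by
  have hκp : ∀ a, (κ a).PosSemidef := fun a => (hκ a).1
  have hκt : ∀ a, (κ a).trace = 1 := fun a => (hκ a).2
  show (1/4 : ℝ) * ∑ x : Bool × Bool, ((M x * rhoAux p κ x).trace).re ≤ 1/2
  set S := rhoAux p κ (false, false) + rhoAux p κ (true, true) with hS
  have hswap := rho_swap p κ
  have hSsub : ∀ x : Bool × Bool, (S - rhoAux p κ x).PosSemidef := by
    rintro ⟨i, i'⟩
    cases i <;> cases i'
    · have h : S - rhoAux p κ (false, false) = rhoAux p κ (true, true) := by
        rw [hS]; abel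
      rw [h]; exact rho_psd p hp κ hκp _
    · have h : S - rhoAux p κ (false, true) = rhoAux p κ (true, false) := by
        rw [hS, hswap]; abel
      rw [h]; exact rho_psd p hp κ hκp _
    · have h : S - rhoAux p κ (true, false) = rhoAux p κ (false, true) := by
        rw [hS, hswap]; abel
      rw [h]; exact rho_psd p hp κ hκp _
    · have h : S - rhoAux p κ (true, true) = rhoAux p κ (false, false) := by
        rw [hS]; abel
      rw [h]; exact rho_psd p hp κ hκp _
  have hbound : ∀ x : Bool × Bool,
      ((M x * rhoAux p κ x).trace).re ≤ ((M x * S).trace).re := by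
    intro x
    have h := psd_trace_mul_nonneg (hM x) (hSsub x)
    rw [mul_sub, Matrix.trace_sub] at h
    have h2 := (Complex.le_def.mp h).1
    rw [Complex.sub_re, Complex.zero_re] at h2
    linarith [h2]
  have hStr : S.trace = 2 := by
    rw [hS, Matrix.trace_add, rho_trace p hpsum κ hκt, rho_trace p hpsum κ hκt]
    norm_num
  calc (1/4 : ℝ) * ∑ x : Bool × Bool, ((M x * rhoAux p κ x).trace).re
      ≤ (1/4 : ℝ) * ∑ x : Bool × Bool, ((M x * S).trace).re := by
        have h3 : ∑ x : Bool × Bool, ((M x * rhoAux p κ x).trace).re ≤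
            ∑ x : Bool × Bool, ((M x * S).trace).re :=
          Finset.sum_le_sum (fun x _ => hbound x)
        linarith [h3]
    _ = 1/2 := by
        rw [← Complex.re_sum, ← Matrix.trace_sum, ← Finset.sum_mul, hMsum, one_mul, hStr]
        norm_num
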